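/- arXiv:1803.06146 — 4 statements merged into one kernel-verified Lean document; each statement's English description precedes it below -/
import Mathlib

section
/- Let n ≥ 1, let c ∈ (0,1), and let Q be an n×n real substochastic matrix. Let R be the graph-normalized PageRank vector and R^{(N)} its N-th finite approximation. Then for every N ∈ ℕ and every ε > 0, the fraction of indices with large truncation error satisfies (1/n)·#{i ∈ [n] : R_i − R^{(N)}_i ≥ ε} ≤ c^{N+1}/ε; equivalently, for a uniformly chosen vertex V_n, P(|R_{V_n} − R^{(N)}_{V_n}| ≥ ε) ≤ c^{N+1}/ε. -/
/-- For `n ≥ 1`, `c ∈ (0,1)`, `Q` an `n × n` real substochastic matrix, `R` the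
graph-normalized PageRank vector and `R^{(N)}` its `N`-th finite approximation, for every
`N ∈ ℕ` and `ε > 0`, the fraction of indices with truncation error at least `ε` satisfies
`(1/n) · #{i : R_i - R^{(N)}_i ≥ ε} ≤ c^{N+1}/ε`; i.e. for a uniformly chosen vertex `V_n`,
`P(|R_{V_n} - R^{(N)}_{V_n}| ≥ ε) ≤ c^{N+1}/ε`. -/
theorem stmt_6 (n : ℕ) (hn : 1 ≤ n) (c : ℝ) (hc : c ∈ Set.Ioo (0 : ℝ) 1)
    (Q : Matrix (Fin n) (Fin n) ℝ)
    (hQ0 : ∀ j i, 0 ≤ Q j i) (hQ1 : ∀ j, ∑ i, Q j i ≤ 1)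
    (R : Fin n → ℝ)
    (hR : ∀ i, R i = c * (∑ j, Q j i * R j) + (1 - c))
    (RN : ℕ → Fin n → ℝ)
    (hRN : ∀ N i, RN N i =
      (1 - c) * ∑ k ∈ Finset.range (N + 1), c ^ k * ∑ j, (Q ^ k) j i) :
    ∀ (N : ℕ) (ε : ℝ), 0 < ε →
      ((Finset.univ.filter fun i : Fin n => ε ≤ |R i - RN N i|).card : ℝ) / (n : ℝ)
        ≤ c ^ (N + 1) / ε := by
  obtain ⟨hc0, hc1⟩ := hc
  have hP0 : ∀ k, ∀ j i, 0 ≤ (Q ^ k) j i := by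
    intro k
    induction k with
    | zero =>
      intro j i
      by_cases h : j = i <;> simp [Matrix.one_apply, h]
    | succ k ih =>
      intro j i
      rw [pow_succ, Matrix.mul_apply]
      exact Finset.sum_nonneg fun l _ => mul_nonneg (ih j l) (hQ0 l i)
  have hP1 : ∀ k, ∀ j, ∑ i, (Q ^ k) j i ≤ 1 := by
    intro k
    induction k with
    | zero => intro j; simp [Matrix.one_apply]
    | succ k ih =>
      intro j
      simp only [pow_succ, Matrix.mul_apply]
      rw [Finset.sum_comm]
      calc ∑ l, ∑ i, (Q ^ k) j l * Q l i
          = ∑ l, (Q ^ k) j l * ∑ i, Q l i := by simp [Finset.mul_sum]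
        _ ≤ ∑ l, (Q ^ k) j l * 1 :=
            Finset.sum_le_sum fun l _ => mul_le_mul_of_nonneg_left (hQ1 l) (hP0 k j l)
        _ ≤ 1 := by simpa using ih j
  -- ℓ¹ bound on R
  have hS : ∑ j, |R j| ≤ (n : ℝ) := by
    have h1 : ∑ i, |R i| ≤ (1 - c) * n + c * ∑ j, |R j| := by
      calc ∑ i, |R i| ≤ ∑ i, ((1 - c) + c * ∑ j, Q j i * |R j|) := by
            apply Finset.sum_le_sum
            intro i _
            rw [hR i]
            have h2 : |∑ j, Q j i * R j| ≤ ∑ j, Q j i * |R j| := by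
              refine (Finset.abs_sum_le_sum_abs _ _).trans ?_
              apply Finset.sum_le_sum
              intro j _
              rw [abs_mul, abs_of_nonneg (hQ0 j i)]
            calc |c * (∑ j, Q j i * R j) + (1 - c)|
                ≤ |c * ∑ j, Q j i * R j| + |1 - c| := abs_add_le _ _
              _ = c * |∑ j, Q j i * R j| + (1 - c) := by
                  rw [abs_mul, abs_of_pos hc0,
                    abs_of_pos (show (0 : ℝ) < 1 - c by linarith)]
              _ ≤ (1 - c) + c * ∑ j, Q j i * |R j| := by
                  have := mul_le_mul_of_nonneg_left h2 hc0.le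
                  linarith
        _ = (1 - c) * n + c * ∑ i, ∑ j, Q j i * |R j| := by
            rw [Finset.sum_add_distrib, Finset.sum_const, ← Finset.mul_sum]
            simp [nsmul_eq_mul, mul_comm]
        _ ≤ (1 - c) * n + c * ∑ j, |R j| := by
            have h3 : ∑ i, ∑ j, Q j i * |R j| ≤ ∑ j, |R j| := by
              rw [Finset.sum_comm]
              calc ∑ j, ∑ i, Q j i * |R j|
                  = ∑ j, (∑ i, Q j i) * |R j| :=
                    Finset.sum_congr rfl fun j _ => (Finset.sum_mul _ _ _).symm
                _ ≤ ∑ j, 1 * |R j| := Finset.sum_le_sum fun j _ =>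
                    mul_le_mul_of_nonneg_right (hQ1 j) (abs_nonneg _)
                _ = ∑ j, |R j| := by simp
            nlinarith
    nlinarith
  -- key identity
  have hkey : ∀ M i, R i - RN M i = c ^ (M + 1) * ∑ j, (Q ^ (M + 1)) j i * R j := by
    intro M
    induction M with
    | zero =>
      intro i
      have h1 : ∑ j, ((Q ^ 0 : Matrix (Fin n) (Fin n) ℝ)) j i = 1 := by
        simp [Matrix.one_apply]
      rw [hRN 0 i, hR i, Finset.sum_range_one, h1]
      ring
    | succ M ih =>
      intro i
      have hstep : RN (M + 1) i
          = RN M i + (1 - c) * (c ^ (M + 1) * ∑ j, (Q ^ (M + 1)) j i) := by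
        rw [hRN (M + 1) i, hRN M i, Finset.sum_range_succ, mul_add]
      have hpow : ∀ l, (Q ^ (M + 1 + 1)) l i = ∑ j, Q l j * (Q ^ (M + 1)) j i := by
        intro l
        rw [pow_succ' Q (M + 1), Matrix.mul_apply]
      have hmain : ∑ l, (Q ^ (M + 1 + 1)) l i * R l
          = ∑ j, (Q ^ (M + 1)) j i * ∑ l, Q l j * R l := by
        simp only [hpow, Finset.sum_mul, Finset.mul_sum]
        rw [Finset.sum_comm]
        exact Finset.sum_congr rfl fun j _ => Finset.sum_congr rfl fun l _ => by ring
      have hc' : ∀ j, c * ∑ l, Q l j * R l = R j - (1 - c) := fun j => by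
        rw [hR j]; ring
      have hRHS : c ^ (M + 1 + 1) * ∑ l, (Q ^ (M + 1 + 1)) l i * R l
          = c ^ (M + 1) * ∑ j, (Q ^ (M + 1)) j i * R j
            - (1 - c) * (c ^ (M + 1) * ∑ j, (Q ^ (M + 1)) j i) := by
        calc c ^ (M + 1 + 1) * ∑ l, (Q ^ (M + 1 + 1)) l i * R l
            = c ^ (M + 1) * ∑ j, (Q ^ (M + 1)) j i * (c * ∑ l, Q l j * R l) := by
              rw [hmain]
              simp only [Finset.mul_sum]
              exact Finset.sum_congr rfl fun j _ =>
                Finset.sum_congr rfl fun l _ => by ring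
          _ = c ^ (M + 1) * ∑ j, (Q ^ (M + 1)) j i * (R j - (1 - c)) := by
              congr 1
              exact Finset.sum_congr rfl fun j _ => by rw [hc' j]
          _ = c ^ (M + 1) * ∑ j, (Q ^ (M + 1)) j i * R j
              - (1 - c) * (c ^ (M + 1) * ∑ j, (Q ^ (M + 1)) j i) := by
              simp only [Finset.mul_sum, ← Finset.sum_sub_distrib]
              exact Finset.sum_congr rfl fun j _ => by ring
      rw [hstep, hRHS, sub_add_eq_sub_sub, ih i]
  -- sum of errors
  intro N ε hε
  have herr : ∑ i, |R i - RN N i| ≤ c ^ (N + 1) * n := by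
    have hcp : 0 ≤ c ^ (N + 1) := le_of_lt (pow_pos hc0 _)
    calc ∑ i, |R i - RN N i|
        = ∑ i, c ^ (N + 1) * |∑ j, (Q ^ (N + 1)) j i * R j| := by
          apply Finset.sum_congr rfl
          intro i _
          rw [hkey N i, abs_mul, abs_of_nonneg hcp]
      _ ≤ ∑ i, c ^ (N + 1) * ∑ j, (Q ^ (N + 1)) j i * |R j| := by
          apply Finset.sum_le_sum
          intro i _
          apply mul_le_mul_of_nonneg_left _ hcp
          refine (Finset.abs_sum_le_sum_abs _ _).trans ?_
          apply Finset.sum_le_sum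
          intro j _
          rw [abs_mul, abs_of_nonneg (hP0 _ j i)]
      _ = c ^ (N + 1) * ∑ j, (∑ i, (Q ^ (N + 1)) j i) * |R j| := by
          rw [← Finset.mul_sum]
          congr 1
          rw [Finset.sum_comm]
          exact Finset.sum_congr rfl fun j _ => (Finset.sum_mul _ _ _).symm
      _ ≤ c ^ (N + 1) * ∑ j, 1 * |R j| := by
          apply mul_le_mul_of_nonneg_left _ hcp
          exact Finset.sum_le_sum fun j _ =>
            mul_le_mul_of_nonneg_right (hP1 (N + 1) j) (abs_nonneg _)
      _ ≤ c ^ (N + 1) * n := by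
          apply mul_le_mul_of_nonneg_left _ hcp
          simpa using hS
  -- Markov
  set T := Finset.univ.filter fun i : Fin n => ε ≤ |R i - RN N i| with hT
  have hmark : (T.card : ℝ) * ε ≤ c ^ (N + 1) * n := by
    calc (T.card : ℝ) * ε = ∑ _i ∈ T, ε := by rw [Finset.sum_const, nsmul_eq_mul]
      _ ≤ ∑ i ∈ T, |R i - RN N i| := by
          apply Finset.sum_le_sum
          intro i hi
          exact (Finset.mem_filter.mp hi).2
      _ ≤ ∑ i, |R i - RN N i| :=
          Finset.sum_le_sum_of_subset_of_nonneg (Finset.filter_subset _ _)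
            fun i _ _ => abs_nonneg _
      _ ≤ c ^ (N + 1) * n := herr
  have hn0 : (0 : ℝ) < n := by exact_mod_cast hn
  rw [div_le_div_iff₀ hn0 hε]
  linarith [hmark]
end

section
/- Let n ≥ 1, let c ∈ (0,1), and let Q be an n×n real substochastic matrix with graph-normalized PageRank vector R. Then for every i ∈ [n], R_i ≥ (1−c)·(1 + c·Σ_{j∈[n]} Q_{j,i}); in particular R_i > 1−c whenever the i-th column of Q is nonzero, and R_i ≥ 1−c always. -/
/-- For `n ≥ 1`, `c ∈ (0,1)`, `Q` an `n × n` real substochastic matrix with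
graph-normalized PageRank vector `R`: for every `i`,
`R_i ≥ (1-c)(1 + c ∑_j Q_{j,i})`; in particular `R_i > 1-c` whenever the `i`-th column of
`Q` is nonzero, and `R_i ≥ 1-c` always. -/
theorem stmt_9 (n : ℕ) (hn : 1 ≤ n) (c : ℝ) (hc : c ∈ Set.Ioo (0 : ℝ) 1)
    (Q : Matrix (Fin n) (Fin n) ℝ)
    (hQ0 : ∀ j i, 0 ≤ Q j i) (hQ1 : ∀ j, ∑ i, Q j i ≤ 1)
    (R : Fin n → ℝ)
    (hR : ∀ i, R i = c * (∑ j, Q j i * R j) + (1 - c)) :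
    ∀ i, (1 - c) * (1 + c * ∑ j, Q j i) ≤ R i ∧
      ((∃ j, Q j i ≠ 0) → 1 - c < R i) ∧ 1 - c ≤ R i := by
  obtain ⟨hc0, hc1⟩ := hc
  -- Step 1: R is nonnegative, via ℓ¹ bound on negative parts.
  have hRnn : ∀ j, 0 ≤ R j := by
    set N : ℝ := ∑ j, max 0 (-R j) with hNdef
    have hterm : ∀ j, (0 : ℝ) ≤ max 0 (-R j) := fun j => le_max_left _ _
    have hNnn : 0 ≤ N := Finset.sum_nonneg fun j _ => hterm j
    have key : ∀ i, max 0 (-R i) ≤ c * ∑ j, Q j i * max 0 (-R j) := by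
      intro i
      have hrhs : 0 ≤ c * ∑ j, Q j i * max 0 (-R j) := by
        apply mul_nonneg hc0.le
        exact Finset.sum_nonneg fun j _ => mul_nonneg (hQ0 j i) (hterm j)
      have h2 : ∑ j, Q j i * (-(max 0 (-R j))) ≤ ∑ j, Q j i * R j := by
        apply Finset.sum_le_sum; intro j _
        apply mul_le_mul_of_nonneg_left _ (hQ0 j i)
        have := le_max_right (0 : ℝ) (-R j)
        linarith
      have h3 : -R i ≤ c * ∑ j, Q j i * max 0 (-R j) := by
        rw [hR i]
        have h4 : ∑ j, Q j i * (-(max 0 (-R j))) =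
            -∑ j, Q j i * max 0 (-R j) := by
          rw [← Finset.sum_neg_distrib]; apply Finset.sum_congr rfl; intros; ring
        rw [h4] at h2
        nlinarith
      exact max_le hrhs h3
    have hNle : N ≤ c * N := by
      calc N ≤ ∑ i, c * ∑ j, Q j i * max 0 (-R j) :=
              Finset.sum_le_sum fun i _ => key i
        _ = c * ∑ j, (max 0 (-R j)) * ∑ i, Q j i := by
              rw [← Finset.mul_sum, Finset.sum_comm]
              congr 1; apply Finset.sum_congr rfl; intros j _
              rw [Finset.mul_sum]; apply Finset.sum_congr rfl; intros; ring
        _ ≤ c * ∑ j, (max 0 (-R j)) * 1 := by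
              apply mul_le_mul_of_nonneg_left _ hc0.le
              exact Finset.sum_le_sum fun j _ =>
                mul_le_mul_of_nonneg_left (hQ1 j) (hterm j)
        _ = c * N := by simp [hNdef]
    have hN0 : N = 0 := by nlinarith
    intro j
    have := (Finset.sum_eq_zero_iff_of_nonneg (fun j _ => hterm j)).mp hN0 j
      (Finset.mem_univ j)
    have := le_max_right (0 : ℝ) (-R j)
    linarith
  -- Step 2: R j ≥ 1 - c for all j.
  have hR1c : ∀ j, 1 - c ≤ R j := by
    intro j
    have hs : 0 ≤ ∑ k, Q k j * R k :=
      Finset.sum_nonneg fun k _ => mul_nonneg (hQ0 k j) (hRnn k)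
    rw [hR j]; nlinarith
  intro i
  have hsum : (1 - c) * ∑ j, Q j i ≤ ∑ j, Q j i * R j := by
    rw [Finset.mul_sum]
    apply Finset.sum_le_sum; intro j _
    calc (1 - c) * Q j i = Q j i * (1 - c) := by ring
      _ ≤ Q j i * R j := mul_le_mul_of_nonneg_left (hR1c j) (hQ0 j i)
  have hcolnn : 0 ≤ ∑ j, Q j i :=
    Finset.sum_nonneg fun j _ => hQ0 j i
  refine ⟨by rw [hR i]; nlinarith, ?_, hR1c i⟩
  rintro ⟨j, hj⟩
  have hjpos : 0 < Q j i := lt_of_le_of_ne (hQ0 j i) (Ne.symm hj)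
  have hspos : 0 < ∑ k, Q k i * R k := by
    apply Finset.sum_pos' (fun k _ => mul_nonneg (hQ0 k i) (hRnn k))
    exact ⟨j, Finset.mem_univ j, mul_pos hjpos (lt_of_lt_of_le (by linarith) (hR1c j))⟩
  rw [hR i]; nlinarith
end

section
/- Let c ∈ (0,1). For each n ∈ ℕ, let (X_{n,i})_{i∈[n]} and, for each N ∈ ℕ, (X^{(N)}_{n,i})_{i∈[n]} be nonnegative random variables on a common probability space with X^{(N)}_{n,i} ≤ X_{n,i} almost surely for all i, and E[(1/n)·Σ_{i∈[n]} (X_{n,i} − X^{(N)}_{n,i})] ≤ c^{N+1}. Let (Y^{(N)})_{N∈ℕ} and Y be nonnegative random variables on a probability space such that almost surely N ↦ Y^{(N)} is nondecreasing with limit Y, finite almost surely. Assume that for every N ∈ ℕ and every s > 0, the empirical fraction (1/n)·Σ_{i∈[n]} 1{X^{(N)}_{n,i} > s} converges in probability to P(Y^{(N)} > s) as n → ∞. Then for every r > 0 that is a continuity point of the distribution function of Y, the empirical fraction (1/n)·Σ_{i∈[n]} 1{X_{n,i} > r} converges in probability to P(Y > r) as n → ∞. -/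
open MeasureTheory Filter

/-- Let `c ∈ (0,1)`. For each `n`, let `(X_{n,i})_{i∈[n]}` and
`(X^{(N)}_{n,i})_{i∈[n]}` be nonnegative random variables on a common space with
`X^{(N)}_{n,i} ≤ X_{n,i}` a.s. and `E[(1/n) ∑_i (X_{n,i} - X^{(N)}_{n,i})] ≤ c^{N+1}`.
Let `Y^{(N)} ↑ Y` almost surely (nonnegative, `Y` finite a.s.). If for every `N` and
`s > 0` the empirical fraction `(1/n) ∑_i 1{X^{(N)}_{n,i} > s}` converges in probability
to `P(Y^{(N)} > s)`, then for every continuity point `r > 0` of the law of `Y`, the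
empirical fraction `(1/n) ∑_i 1{X_{n,i} > r}` converges in probability to `P(Y > r)`. -/
theorem stmt_15 (c : ℝ) (hc : c ∈ Set.Ioo (0 : ℝ) 1)
    (Ω : ℕ → Type*) [∀ n, MeasureSpace (Ω n)]
    [∀ n, IsProbabilityMeasure (volume : Measure (Ω n))]
    (X : ∀ n, Fin n → Ω n → ℝ) (XN : ℕ → ∀ n, Fin n → Ω n → ℝ)
    (hXmeas : ∀ n i, Measurable (X n i)) (hXNmeas : ∀ N n i, Measurable (XN N n i))
    (hXpos : ∀ n i, ∀ᵐ ω ∂(volume : Measure (Ω n)), 0 ≤ X n i ω)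
    (hXNpos : ∀ N n i, ∀ᵐ ω ∂(volume : Measure (Ω n)), 0 ≤ XN N n i ω)
    (hle : ∀ N n i, ∀ᵐ ω ∂(volume : Measure (Ω n)), XN N n i ω ≤ X n i ω)
    (herr : ∀ (N : ℕ) (n : ℕ),
      ∫⁻ ω, ENNReal.ofReal ((1 / (n : ℝ)) * ∑ i, (X n i ω - XN N n i ω))
        ≤ ENNReal.ofReal (c ^ (N + 1)))
    (Ω' : Type*) [MeasureSpace Ω'] [IsProbabilityMeasure (volume : Measure Ω')]
    (Y : Ω' → ℝ) (YN : ℕ → Ω' → ℝ)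
    (hYmeas : Measurable Y) (hYNmeas : ∀ N, Measurable (YN N))
    (hYpos : ∀ᵐ ω ∂(volume : Measure Ω'), 0 ≤ Y ω)
    (hYNpos : ∀ N, ∀ᵐ ω ∂(volume : Measure Ω'), 0 ≤ YN N ω)
    (hmono : ∀ᵐ ω ∂(volume : Measure Ω'),
      Monotone (fun N => YN N ω) ∧ Tendsto (fun N => YN N ω) atTop (nhds (Y ω)))
    (hempconv : ∀ (N : ℕ) (s : ℝ), 0 < s → ∀ η : ℝ, 0 < η →
      Tendsto (fun n =>
          (volume : Measure (Ω n)) {ω | η ≤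
            |(1 / (n : ℝ)) * (∑ i, if s < XN N n i ω then (1 : ℝ) else 0) -
              ((volume : Measure Ω') {ω' | s < YN N ω'}).toReal|})
        atTop (nhds 0)) :
    ∀ r : ℝ, 0 < r → (volume : Measure Ω') {ω | Y ω = r} = 0 →
      ∀ η : ℝ, 0 < η →
        Tendsto (fun n =>
            (volume : Measure (Ω n)) {ω | η ≤
              |(1 / (n : ℝ)) * (∑ i, if r < X n i ω then (1 : ℝ) else 0) -
                ((volume : Measure Ω') {ω' | r < Y ω'}).toReal|})
          atTop (nhds 0) := by
  obtain ⟨hc0, hc1⟩ := hc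
  intro r hr hcont η hη
  set μ' : Measure Ω' := volume with hμ'
  set p : ℝ := (μ' {ω' | r < Y ω'}).toReal with hp
  -- a good measurable set G on Ω'
  have hbad : μ' {ω | ¬ (Monotone (fun N => YN N ω) ∧
      Tendsto (fun N => YN N ω) atTop (nhds (Y ω)))} = 0 := ae_iff.mp hmono
  obtain ⟨t, hts, htm, ht0⟩ := exists_measurable_superset_of_null hbad
  set G : Set Ω' := tᶜ with hGdef
  have hGm : MeasurableSet G := htm.compl
  have hGc : μ' Gᶜ = 0 := by simpa [hGdef, compl_compl] using ht0
  have hGood : ∀ ω ∈ G, Monotone (fun N => YN N ω) ∧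
      Tendsto (fun N => YN N ω) atTop (nhds (Y ω)) := by
    intro ω hω
    by_contra h
    exact hω (hts h)
  have hYNle : ∀ ω ∈ G, ∀ N, YN N ω ≤ Y ω := fun ω hω N =>
    (hGood ω hω).1.ge_of_tendsto (hGood ω hω).2 N
  have meq : ∀ S : Set Ω', μ' (S ∩ G) = μ' S := by
    intro S
    refine le_antisymm (measure_mono Set.inter_subset_left) ?_
    calc μ' S ≤ μ' (S ∩ G) + μ' (S \ G) := measure_le_inter_add_diff _ _ _
      _ ≤ μ' (S ∩ G) + μ' Gᶜ := by
          gcongr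
          exact Set.diff_subset_iff.mpr (by simp [Set.union_comm, Set.compl_union_self])
      _ = μ' (S ∩ G) := by rw [hGc, add_zero]
  -- YN ≤ Y in measure of tails
  have htail : ∀ (N : ℕ) (u : ℝ), μ' {ω' | u < YN N ω'} ≤ μ' {ω' | u < Y ω'} := by
    intro N u
    calc μ' {ω' | u < YN N ω'} = μ' ({ω' | u < YN N ω'} ∩ G) := (meq _).symm
      _ ≤ μ' {ω' | u < Y ω'} := by
          refine measure_mono ?_
          rintro ω ⟨h1, h2⟩
          exact lt_of_lt_of_le h1 (hYNle ω h2 N)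
  -- Claim 1: lower convergence
  have hq : Tendsto (fun N => μ' {ω' | r < YN N ω'}) atTop (nhds (μ' {ω' | r < Y ω'})) := by
    have hAmono : Monotone (fun N => {ω' | r < YN N ω'} ∩ G) := by
      intro N M hNM ω hω
      exact ⟨lt_of_lt_of_le hω.1 ((hGood ω hω.2).1 hNM), hω.2⟩
    have hU := tendsto_measure_iUnion_atTop (μ := μ') hAmono
    have hUnion : (⋃ N, ({ω' | r < YN N ω'} ∩ G)) = {ω' | r < Y ω'} ∩ G := by
      ext ω
      simp only [Set.mem_iUnion, Set.mem_inter_iff, Set.mem_setOf_eq]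
      constructor
      · rintro ⟨N, h1, h2⟩
        exact ⟨lt_of_lt_of_le h1 (hYNle ω h2 N), h2⟩
      · rintro ⟨h1, h2⟩
        obtain ⟨N, hN⟩ := ((hGood ω h2).2.eventually (eventually_gt_nhds h1)).exists
        exact ⟨N, hN, h2⟩
    rw [hUnion] at hU
    simpa only [Function.comp_def, meq] using hU
  have hqR : Tendsto (fun N => (μ' {ω' | r < YN N ω'}).toReal) atTop (nhds p) :=
    (ENNReal.tendsto_toReal (measure_ne_top _ _)).comp hq
  -- Claim 2: choose s < r with P(Y > s) ≤ p + η/4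
  have hge_eq : μ' {ω' | r ≤ Y ω'} = μ' {ω' | r < Y ω'} := by
    refine le_antisymm ?_ (measure_mono ?_)
    swap
    · intro ω h
      have h' : r < Y ω := h
      show r ≤ Y ω
      exact le_of_lt h'
    have hsub : {ω' | r ≤ Y ω'} ⊆ {ω' | r < Y ω'} ∪ {ω' | Y ω' = r} := by
      intro ω h
      have h' : r ≤ Y ω := h
      rcases lt_or_eq_of_le h' with h | h
      · exact Or.inl h
      · exact Or.inr h.symm
    calc μ' {ω' | r ≤ Y ω'} ≤ μ' ({ω' | r < Y ω'} ∪ {ω' | Y ω' = r}) := measure_mono hsub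
      _ ≤ μ' {ω' | r < Y ω'} + μ' {ω' | Y ω' = r} := measure_union_le _ _
      _ = μ' {ω' | r < Y ω'} := by rw [hcont, add_zero]
  have hT : Tendsto (fun k : ℕ => μ' {ω' | r - 1 / ((k : ℝ) + 1) < Y ω'}) atTop
      (nhds (μ' {ω' | r < Y ω'})) := by
    have hanti : Antitone (fun k : ℕ => {ω' | r - 1 / ((k : ℝ) + 1) < Y ω'}) := by
      intro k m hkm ω hω
      have h1 : 1 / ((m : ℝ) + 1) ≤ 1 / ((k : ℝ) + 1) := by
        apply one_div_le_one_div_of_le (by positivity)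
        exact_mod_cast add_le_add_left (Nat.cast_le.mpr hkm) 1
      simp only [Set.mem_setOf_eq] at hω ⊢
      linarith
    have hI := tendsto_measure_iInter_atTop (μ := μ')
      (fun k => (measurableSet_lt measurable_const hYmeas).nullMeasurableSet)
      hanti ⟨0, measure_ne_top _ _⟩
    have hinter : (⋂ k : ℕ, {ω' | r - 1 / ((k : ℝ) + 1) < Y ω'}) = {ω' | r ≤ Y ω'} := by
      ext ω
      simp only [Set.mem_iInter, Set.mem_setOf_eq]
      constructor
      · intro h
        by_contra hlt
        push_neg at hlt
        obtain ⟨k, hk⟩ := exists_nat_one_div_lt (sub_pos.mpr hlt)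
        have := h k
        linarith
      · intro h k
        have h0 : (0 : ℝ) < 1 / ((k : ℝ) + 1) := by positivity
        linarith
    rw [hinter, hge_eq] at hI
    exact hI
  have hTR : Tendsto (fun k : ℕ => (μ' {ω' | r - 1 / ((k : ℝ) + 1) < Y ω'}).toReal) atTop
      (nhds p) := (ENNReal.tendsto_toReal (measure_ne_top _ _)).comp hT
  have hev1 : ∀ᶠ k : ℕ in atTop,
      (μ' {ω' | r - 1 / ((k : ℝ) + 1) < Y ω'}).toReal ≤ p + η / 4 :=
    hTR.eventually (eventually_le_nhds (by linarith))
  have hev2 : ∀ᶠ k : ℕ in atTop, 1 / ((k : ℝ) + 1) < r :=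
    tendsto_one_div_add_atTop_nhds_zero_nat.eventually (eventually_lt_nhds hr)
  obtain ⟨k, hk1, hk2⟩ := (hev1.and hev2).exists
  set δ : ℝ := 1 / ((k : ℝ) + 1) with hδdef
  have hδ0 : 0 < δ := by positivity
  set s : ℝ := r - δ with hsdef
  have hs0 : 0 < s := by simp only [hsdef]; linarith
  set θ : ℝ := δ * η / 2 with hθdef
  have hθ0 : 0 < θ := by positivity
  -- main argument
  rw [ENNReal.tendsto_nhds_zero]
  intro ε hε
  -- choice of N
  have hNev1 : ∀ᶠ N : ℕ in atTop, p - η / 4 ≤ (μ' {ω' | r < YN N ω'}).toReal :=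
    hqR.eventually (eventually_ge_nhds (by linarith))
  have hNev2 : ∀ᶠ N : ℕ in atTop,
      ENNReal.ofReal (c ^ (N + 1)) / ENNReal.ofReal θ ≤ ε / 2 := by
    have hcpow : Tendsto (fun N : ℕ => c ^ (N + 1)) atTop (nhds 0) :=
      (tendsto_pow_atTop_nhds_zero_of_lt_one hc0.le hc1).comp (tendsto_add_atTop_nat 1)
    have h2 : Tendsto (fun N : ℕ => ENNReal.ofReal (c ^ (N + 1)) / ENNReal.ofReal θ) atTop
        (nhds 0) := by
      have h3 := ENNReal.Tendsto.div_const (ENNReal.tendsto_ofReal hcpow)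
        (Or.inr (ENNReal.ofReal_pos.mpr hθ0).ne')
      simpa using h3
    exact h2.eventually (eventually_le_nhds (ENNReal.div_pos hε.ne' ENNReal.ofNat_ne_top))
  obtain ⟨N, hN1, hN2⟩ := (hNev1.and hNev2).exists
  -- Markov bound, for every n
  have hmarkov : ∀ n : ℕ,
      (volume : Measure (Ω n)) {ω | θ ≤ (1 / (n : ℝ)) * ∑ i, (X n i ω - XN N n i ω)}
        ≤ ε / 2 := by
    intro n
    have hmeasE : Measurable (fun ω => (1 / (n : ℝ)) * ∑ i, (X n i ω - XN N n i ω)) :=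
      ((Finset.measurable_sum _ (fun i _ => (hXmeas n i).sub (hXNmeas N n i))).const_mul _)
    have h1 := meas_ge_le_lintegral_div (μ := (volume : Measure (Ω n)))
      ((ENNReal.measurable_ofReal.comp hmeasE).aemeasurable)
      (ε := ENNReal.ofReal θ) (ENNReal.ofReal_pos.mpr hθ0).ne' ENNReal.ofReal_ne_top
    calc (volume : Measure (Ω n)) {ω | θ ≤ (1 / (n : ℝ)) * ∑ i, (X n i ω - XN N n i ω)}
        ≤ (volume : Measure (Ω n)) {ω | ENNReal.ofReal θ ≤
            ENNReal.ofReal ((1 / (n : ℝ)) * ∑ i, (X n i ω - XN N n i ω))} :=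
          measure_mono (fun ω hω => ENNReal.ofReal_le_ofReal hω)
      _ ≤ (∫⁻ ω, ENNReal.ofReal ((1 / (n : ℝ)) * ∑ i, (X n i ω - XN N n i ω))) /
            ENNReal.ofReal θ := h1
      _ ≤ ENNReal.ofReal (c ^ (N + 1)) / ENNReal.ofReal θ :=
          ENNReal.div_le_div_right (herr N n) _
      _ ≤ ε / 2 := hN2
  -- bounds from empirical convergence
  have hE1 : ∀ᶠ n : ℕ in atTop, (volume : Measure (Ω n)) {ω | η / 2 ≤
      |(1 / (n : ℝ)) * (∑ i, if r < XN N n i ω then (1 : ℝ) else 0) -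
        (μ' {ω' | r < YN N ω'}).toReal|} ≤ ε / 2 / 2 :=
    (hempconv N r hr (η / 2) (by linarith)).eventually
      (eventually_le_nhds (ENNReal.div_pos (ENNReal.div_pos hε.ne' ENNReal.ofNat_ne_top).ne'
        ENNReal.ofNat_ne_top))
  have hE2 : ∀ᶠ n : ℕ in atTop, (volume : Measure (Ω n)) {ω | η / 4 ≤
      |(1 / (n : ℝ)) * (∑ i, if s < XN N n i ω then (1 : ℝ) else 0) -
        (μ' {ω' | s < YN N ω'}).toReal|} ≤ ε / 2 / 2 :=
    (hempconv N s hs0 (η / 4) (by linarith)).eventually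
      (eventually_le_nhds (ENNReal.div_pos (ENNReal.div_pos hε.ne' ENNReal.ofNat_ne_top).ne'
        ENNReal.ofNat_ne_top))
  filter_upwards [hE1, hE2] with n hn1 hn2
  -- the null bad set in Ω n
  have hbadn : (volume : Measure (Ω n)) {ω | ¬ ∀ i, XN N n i ω ≤ X n i ω} = 0 :=
    ae_iff.mp (ae_all_iff.mpr (fun i => hle N n i))
  -- qN_s ≤ p + η/4
  have hqs : (μ' {ω' | s < YN N ω'}).toReal ≤ p + η / 4 := by
    calc (μ' {ω' | s < YN N ω'}).toReal ≤ (μ' {ω' | s < Y ω'}).toReal :=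
        ENNReal.toReal_mono (measure_ne_top _ _) (htail N s)
      _ ≤ p + η / 4 := hk1
  -- pointwise inclusion
  set E1 : Set (Ω n) := {ω | η / 2 ≤
      |(1 / (n : ℝ)) * (∑ i, if r < XN N n i ω then (1 : ℝ) else 0) -
        (μ' {ω' | r < YN N ω'}).toReal|} with hE1def
  set E2 : Set (Ω n) := {ω | η / 4 ≤
      |(1 / (n : ℝ)) * (∑ i, if s < XN N n i ω then (1 : ℝ) else 0) -
        (μ' {ω' | s < YN N ω'}).toReal|} with hE2def
  set E3 : Set (Ω n) := {ω | θ ≤ (1 / (n : ℝ)) * ∑ i, (X n i ω - XN N n i ω)} with hE3def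
  have hincl : {ω | η ≤ |(1 / (n : ℝ)) * (∑ i, if r < X n i ω then (1 : ℝ) else 0) -
      (μ' {ω' | r < Y ω'}).toReal|} ⊆
      (E1 ∪ E2 ∪ E3) ∪ {ω | ¬ ∀ i, XN N n i ω ≤ X n i ω} := by
    intro ω hω
    by_cases hg : ∀ i, XN N n i ω ≤ X n i ω
    swap
    · exact Or.inr hg
    left
    simp only [Set.mem_setOf_eq] at hω
    set Z : ℝ := (1 / (n : ℝ)) * (∑ i, if r < X n i ω then (1 : ℝ) else 0) with hZdef
    set Wr : ℝ := (1 / (n : ℝ)) * (∑ i, if r < XN N n i ω then (1 : ℝ) else 0) with hWrdef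
    set Ws : ℝ := (1 / (n : ℝ)) * (∑ i, if s < XN N n i ω then (1 : ℝ) else 0) with hWsdef
    set E : ℝ := (1 / (n : ℝ)) * ∑ i, (X n i ω - XN N n i ω) with hEdef
    have hn0 : (0 : ℝ) ≤ 1 / (n : ℝ) := by positivity
    have hWrZ : Wr ≤ Z := by
      apply mul_le_mul_of_nonneg_left _ hn0
      apply Finset.sum_le_sum
      intro i _
      by_cases h : r < XN N n i ω
      · rw [if_pos h, if_pos (lt_of_lt_of_le h (hg i))]
      · rw [if_neg h]
        split_ifs <;> norm_num
    have hZWs : Z ≤ Ws + E / δ := by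
      have hsum : (∑ i, if r < X n i ω then (1 : ℝ) else 0) ≤
          ∑ i, ((if s < XN N n i ω then (1 : ℝ) else 0) + (X n i ω - XN N n i ω) / δ) := by
        apply Finset.sum_le_sum
        intro i _
        have hd0 : 0 ≤ X n i ω - XN N n i ω := sub_nonneg.mpr (hg i)
        by_cases hx : r < X n i ω
        · rw [if_pos hx]
          by_cases hxN : s < XN N n i ω
          · rw [if_pos hxN]
            have : 0 ≤ (X n i ω - XN N n i ω) / δ := by positivity
            linarith
          · rw [if_neg hxN]
            push_neg at hxN
            have hdiff : δ ≤ X n i ω - XN N n i ω := by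
              simp only [hsdef] at hxN
              linarith
            rw [zero_add]
            rw [le_div_iff₀ hδ0, one_mul]
            exact hdiff
        · rw [if_neg hx]
          have : 0 ≤ (X n i ω - XN N n i ω) / δ := by positivity
          split_ifs <;> linarith
      calc Z ≤ (1 / (n : ℝ)) *
          (∑ i, ((if s < XN N n i ω then (1 : ℝ) else 0) + (X n i ω - XN N n i ω) / δ)) :=
            mul_le_mul_of_nonneg_left hsum hn0
        _ = Ws + E / δ := by
            rw [Finset.sum_add_distrib, ← Finset.sum_div, mul_add, hWsdef, hEdef]
            ring
    rcases le_abs.mp hω with hup | hdown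
    · -- Z ≥ p + η
      by_cases hEbig : θ ≤ E
      · exact Or.inr hEbig
      · push_neg at hEbig
        have hEδ : E / δ < η / 2 := by
          rw [div_lt_iff₀ hδ0]
          simp only [hθdef] at hEbig
          linarith [hEbig]
        have hWs : p + η / 2 ≤ Ws := by linarith
        have hmem : η / 4 ≤ |Ws - (μ' {ω' | s < YN N ω'}).toReal| := by
          rw [le_abs]
          left
          linarith [hqs]
        exact Or.inl (Or.inr hmem)
    · -- Z ≤ p − η
      have hmem : η / 2 ≤ |Wr - (μ' {ω' | r < YN N ω'}).toReal| := by
        rw [le_abs]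
        right
        have h1 : Wr ≤ p - η := by linarith
        have h2 : p - η / 4 ≤ (μ' {ω' | r < YN N ω'}).toReal := hN1
        linarith
      exact Or.inl (Or.inl hmem)
  calc (volume : Measure (Ω n)) {ω | η ≤
      |(1 / (n : ℝ)) * (∑ i, if r < X n i ω then (1 : ℝ) else 0) -
        (μ' {ω' | r < Y ω'}).toReal|}
      ≤ (volume : Measure (Ω n)) ((E1 ∪ E2 ∪ E3) ∪ {ω | ¬ ∀ i, XN N n i ω ≤ X n i ω}) :=
        measure_mono hincl
    _ ≤ (volume : Measure (Ω n)) (E1 ∪ E2 ∪ E3) +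
        (volume : Measure (Ω n)) {ω | ¬ ∀ i, XN N n i ω ≤ X n i ω} := measure_union_le _ _
    _ = (volume : Measure (Ω n)) (E1 ∪ E2 ∪ E3) := by rw [hbadn, add_zero]
    _ ≤ (volume : Measure (Ω n)) (E1 ∪ E2) + (volume : Measure (Ω n)) E3 := measure_union_le _ _
    _ ≤ ((volume : Measure (Ω n)) E1 + (volume : Measure (Ω n)) E2) +
        (volume : Measure (Ω n)) E3 := by gcongr; exact measure_union_le _ _
    _ ≤ (ε / 2 / 2 + ε / 2 / 2) + ε / 2 :=
        add_le_add (add_le_add hn1 hn2) (hmarkov n)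
    _ = ε := by rw [ENNReal.add_halves, ENNReal.add_halves]
end

section
/- Let n ≥ 1, let c ∈ (0,1), and let (Ω, F, P) be a probability space. Let A : Ω → (n×n real matrices) be measurable such that almost surely all entries of A are nonnegative and every row sum of A is at most c. Let B : Ω → ℝ^n be measurable and integrable with B_j ≥ 0 almost surely and E[B_j] = 1−c for every j ∈ [n], and suppose B is independent of A. Define the random row vectors R(ω) = Σ_{k=0}^∞ B(ω) A(ω)^k and, for N ∈ ℕ, R^{(N)}(ω) = Σ_{k=0}^{N} B(ω) A(ω)^k. Then for every N ∈ ℕ, E[(1/n)·Σ_{i∈[n]} (R_i − R^{(N)}_i)] ≤ c^{N+1}. -/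
open MeasureTheory Filter

/-- Matrices over a measurable space carry the (entrywise) product σ-algebra. -/
local instance (priority := 100) matrixMeasurableSpace {m n α : Type*} [MeasurableSpace α] :
    MeasurableSpace (Matrix m n α) :=
  inferInstanceAs (MeasurableSpace (m → n → α))

/-- Let `n ≥ 1`, `c ∈ (0,1)`, and `(Ω, F, P)` a probability space. Let
`A : Ω → ℝ^{n×n}` be measurable with, almost surely, nonnegative entries and row sums at
most `c`. Let `B : Ω → ℝ^n` be measurable, componentwise integrable, nonnegative a.s.,
with `E[B_j] = 1 - c` for every `j`, and independent of `A`. Define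
`R(ω) = ∑_{k=0}^∞ B(ω) A(ω)^k` and `R^{(N)}(ω) = ∑_{k=0}^N B(ω) A(ω)^k`. Then for every
`N`, `E[(1/n) ∑_i (R_i - R^{(N)}_i)] ≤ c^{N+1}`. -/
theorem stmt_16 (n : ℕ) (hn : 1 ≤ n) (c : ℝ) (hc : c ∈ Set.Ioo (0 : ℝ) 1)
    (Ω : Type*) [MeasureSpace Ω] [IsProbabilityMeasure (volume : Measure Ω)]
    (A : Ω → Matrix (Fin n) (Fin n) ℝ) (hAmeas : Measurable A)
    (hA0 : ∀ᵐ ω ∂(volume : Measure Ω), ∀ j i, 0 ≤ A ω j i)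
    (hA1 : ∀ᵐ ω ∂(volume : Measure Ω), ∀ j, ∑ i, A ω j i ≤ c)
    (B : Ω → Fin n → ℝ) (hBmeas : Measurable B)
    (hBint : ∀ j, Integrable (fun ω => B ω j))
    (hB0 : ∀ᵐ ω ∂(volume : Measure Ω), ∀ j, 0 ≤ B ω j)
    (hBexp : ∀ j, ∫ ω, B ω j = 1 - c)
    (hindep : ProbabilityTheory.IndepFun B A)
    (R : Ω → Fin n → ℝ)
    (hR : ∀ ω, R ω = ∑' k : ℕ, Matrix.vecMul (B ω) (A ω ^ k))
    (RN : ℕ → Ω → Fin n → ℝ)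
    (hRN : ∀ N ω, RN N ω = ∑ k ∈ Finset.range (N + 1), Matrix.vecMul (B ω) (A ω ^ k)) :
    ∀ N : ℕ,
      ∫⁻ ω, ENNReal.ofReal ((1 / (n : ℝ)) * ∑ i, (R ω i - RN N ω i))
        ≤ ENNReal.ofReal (c ^ (N + 1)) := by
  intro N
  obtain ⟨hc0, hc1⟩ := hc
  have hcnn : (0:ℝ) ≤ c := hc0.le
  have h1c : (0:ℝ) < 1 - c := by linarith
  have hn0 : (0:ℝ) < (n:ℝ) := by exact_mod_cast hn
  set C : ℝ := (1 / (n:ℝ)) * ((1-c)⁻¹ * c ^ (N+1)) with hC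
  set g : Ω → ℝ := fun ω => C * ∑ j, B ω j with hg
  have hCnn : 0 ≤ C := by
    apply mul_nonneg (by positivity)
    exact mul_nonneg (inv_nonneg.2 h1c.le) (pow_nonneg hcnn _)
  have hgint : Integrable g :=
    (integrable_finset_sum _ (fun j _ => hBint j)).const_mul C
  have hg0 : 0 ≤ᵐ[(volume : Measure Ω)] g := by
    filter_upwards [hB0] with ω hB0ω
    exact mul_nonneg hCnn (Finset.sum_nonneg fun j _ => hB0ω j)
  have hbound : ∀ᵐ ω ∂(volume : Measure Ω),
      (1 / (n:ℝ)) * ∑ i, (R ω i - RN N ω i) ≤ g ω := by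
    filter_upwards [hA0, hA1, hB0] with ω hA0ω hA1ω hB0ω
    set f : ℕ → Fin n → ℝ := fun k => Matrix.vecMul (B ω) (A ω ^ k) with hf
    set S : ℝ := ∑ j, B ω j with hS
    have hS0 : 0 ≤ S := Finset.sum_nonneg fun j _ => hB0ω j
    have hpow0 : ∀ k, ∀ j i, 0 ≤ (A ω ^ k) j i := by
      intro k
      induction k with
      | zero =>
        intro j i
        by_cases h : j = i <;> simp [Matrix.one_apply, h]
      | succ k ih =>
        intro j i
        rw [pow_succ, Matrix.mul_apply]
        exact Finset.sum_nonneg fun l _ => mul_nonneg (ih j l) (hA0ω l i)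
    have hrow : ∀ k, ∀ j, ∑ i, (A ω ^ k) j i ≤ c ^ k := by
      intro k
      induction k with
      | zero => intro j; simp [Matrix.one_apply]
      | succ k ih =>
        intro j
        rw [pow_succ]
        calc ∑ i, (A ω ^ k * A ω) j i
            = ∑ l, (A ω ^ k) j l * ∑ i, A ω l i := by
              simp only [Matrix.mul_apply, Finset.mul_sum]
              rw [Finset.sum_comm]
          _ ≤ ∑ l, (A ω ^ k) j l * c :=
              Finset.sum_le_sum fun l _ =>
                mul_le_mul_of_nonneg_left (hA1ω l) (hpow0 k j l)
          _ = (∑ l, (A ω ^ k) j l) * c := by rw [← Finset.sum_mul]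
          _ ≤ c ^ k * c := mul_le_mul_of_nonneg_right (ih j) hcnn
          _ = c ^ (k+1) := (pow_succ c k).symm
    have hfapp : ∀ k i, f k i = ∑ j, B ω j * (A ω ^ k) j i := by
      intro k i
      simp [hf, Matrix.vecMul, dotProduct]
    have hf0 : ∀ k i, 0 ≤ f k i := by
      intro k i
      rw [hfapp]
      exact Finset.sum_nonneg fun j _ => mul_nonneg (hB0ω j) (hpow0 k j i)
    have hfs : ∀ k, ∑ i, f k i ≤ c ^ k * S := by
      intro k
      calc ∑ i, f k i = ∑ j, B ω j * ∑ i, (A ω ^ k) j i := by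
            simp only [hfapp, Finset.mul_sum]
            rw [Finset.sum_comm]
        _ ≤ ∑ j, B ω j * c ^ k :=
            Finset.sum_le_sum fun j _ =>
              mul_le_mul_of_nonneg_left (hrow k j) (hB0ω j)
        _ = c ^ k * S := by rw [hS, ← Finset.sum_mul]; ring
    have hsum_i : ∀ i, Summable (fun k => f k i) := by
      intro i
      apply Summable.of_nonneg_of_le (fun k => hf0 k i)
        (fun k => le_trans
          (Finset.single_le_sum (fun i' _ => hf0 k i') (Finset.mem_univ i))
          (hfs k))
      exact (summable_geometric_of_lt_one hcnn hc1).mul_right S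
    have hsum : Summable f := Pi.summable.mpr hsum_i
    have htail : ∀ i, R ω i - RN N ω i = ∑' k, f (k + (N+1)) i := by
      intro i
      have h1 : R ω i = ∑' k, f k i := by rw [hR]; exact tsum_apply hsum
      have h2 : RN N ω i = ∑ k ∈ Finset.range (N+1), f k i := by
        rw [hRN]; simp; rfl
      have h3 := (hsum_i i).sum_add_tsum_nat_add (N+1)
      rw [h1, h2]
      linarith
    have hshift : ∀ i, Summable (fun k => f (k + (N+1)) i) := fun i =>
      (hsum_i i).comp_injective (add_left_injective (N+1))
    have hswap : ∑ i, (R ω i - RN N ω i) = ∑' k, ∑ i, f (k + (N+1)) i := by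
      simp_rw [htail]
      exact (Summable.tsum_finsetSum (fun i _ => hshift i)).symm
    have hs2 : Summable (fun k : ℕ => c ^ (k + (N+1)) * S) := by
      simpa [pow_add, mul_assoc] using
        (summable_geometric_of_lt_one hcnn hc1).mul_right (c ^ (N+1) * S)
    have hle : ∑' k, ∑ i, f (k + (N+1)) i ≤ (1-c)⁻¹ * (c ^ (N+1) * S) := by
      have h4 : ∑' k, ∑ i, f (k + (N+1)) i ≤ ∑' k : ℕ, c ^ (k + (N+1)) * S :=
        Summable.tsum_le_tsum (fun k => hfs (k + (N+1)))
          (summable_sum fun i _ => hshift i) hs2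
      have h5 : ∑' k : ℕ, c ^ (k + (N+1)) * S = (1-c)⁻¹ * (c ^ (N+1) * S) := by
        simp_rw [pow_add, mul_assoc]
        rw [tsum_mul_right, tsum_geometric_of_lt_one hcnn hc1]
      linarith
    have hfin : ∑ i, (R ω i - RN N ω i) ≤ (1-c)⁻¹ * (c ^ (N+1) * S) := by
      rw [hswap]; exact hle
    calc (1 / (n:ℝ)) * ∑ i, (R ω i - RN N ω i)
        ≤ (1 / (n:ℝ)) * ((1-c)⁻¹ * (c ^ (N+1) * S)) :=
          mul_le_mul_of_nonneg_left hfin (by positivity)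
      _ = g ω := by rw [hg]; simp only; rw [hC, ← hS]; ring
  have hint : ∫ ω, g ω = c ^ (N+1) := by
    rw [hg]
    simp only
    rw [integral_const_mul, integral_finset_sum _ (fun j _ => hBint j)]
    simp only [hBexp, Finset.sum_const, Finset.card_univ, Fintype.card_fin,
      nsmul_eq_mul, hC]
    field_simp
  calc ∫⁻ ω, ENNReal.ofReal ((1 / (n : ℝ)) * ∑ i, (R ω i - RN N ω i))
      ≤ ∫⁻ ω, ENNReal.ofReal (g ω) :=
        lintegral_mono_ae (hbound.mono fun ω h => ENNReal.ofReal_le_ofReal h)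
    _ = ENNReal.ofReal (∫ ω, g ω) :=
        (ofReal_integral_eq_lintegral_ofReal hgint hg0).symm
    _ = ENNReal.ofReal (c ^ (N+1)) := by rw [hint]
end
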